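/- For every fixed m ≥ 2, the ratio of the number of single-peaked (n,m)-elections to (m!/2)·2^{(m-1)n} tends to 1 as n → ∞. -/

import Mathlib

open Finset Equiv

def SPwrt {m : ℕ} (V A : Equiv.Perm (Fin m)) : Prop :=
  ∀ c₁ c₂ c₃ : Fin m, ¬(A c₁ < A c₂ ∧ A c₂ < A c₃ ∧ V c₁ < V c₂ ∧ V c₃ < V c₂)

def SPElection {n m : ℕ} (P : Fin n → Equiv.Perm (Fin m)) : Prop :=
  ∃ A : Equiv.Perm (Fin m), ∀ i, SPwrt (P i) A

/-- `valley V` means `V` is single peaked with respect to the identity axis. -/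
def valley {m : ℕ} (V : Equiv.Perm (Fin m)) : Prop := SPwrt V 1

lemma spwrt_iff_valley {m : ℕ} (V A : Equiv.Perm (Fin m)) :
    SPwrt V A ↔ valley (V * A⁻¹) := by
  constructor
  · intro h d₁ d₂ d₃ hd
    simp only [Perm.one_apply, Perm.mul_apply] at hd
    exact h (A⁻¹ d₁) (A⁻¹ d₂) (A⁻¹ d₃) (by simpa using hd)
  · intro h c₁ c₂ c₃ hc
    have := h (A c₁) (A c₂) (A c₃)
    simp only [Perm.one_apply, Perm.mul_apply, Perm.inv_def, Equiv.symm_apply_apply] at this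
    exact this hc

lemma spwrt_revPerm_mul {m : ℕ} (V A : Equiv.Perm (Fin m)) :
    SPwrt V (Fin.revPerm * A) ↔ SPwrt V A := by
  constructor
  · intro h c₁ c₂ c₃ hc
    have := h c₃ c₂ c₁
    simp only [Perm.mul_apply, Fin.revPerm_apply, Fin.rev_lt_rev] at this
    tauto
  · intro h c₁ c₂ c₃ hc
    have := h c₃ c₂ c₁
    simp only [Perm.mul_apply, Fin.revPerm_apply, Fin.rev_lt_rev] at hc
    tauto

lemma valley_one {m : ℕ} : valley (1 : Equiv.Perm (Fin m)) := by
  intro c₁ c₂ c₃ hc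
  simp only [Perm.one_apply] at hc
  exact absurd (hc.2.1.trans hc.2.2.2) (lt_irrefl _)

lemma valley_revPerm {m : ℕ} : valley (Fin.revPerm : Equiv.Perm (Fin m)) := by
  intro c₁ c₂ c₃ hc
  simp only [Perm.one_apply, Fin.revPerm_apply, Fin.rev_lt_rev] at hc
  exact absurd (hc.2.2.1.trans hc.1) (lt_irrefl _)

/-- a strictly monotone permutation of `Fin m` is the identity -/
lemma perm_strictMono_eq_one {m : ℕ} (W : Equiv.Perm (Fin m)) (h : StrictMono ⇑W) :
    W = 1 := by
  have h1 : ∀ x : Fin m, W x ∈ (univ : Finset (Fin m)) := fun x => mem_univ _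
  have h2 : ∀ x : Fin m, (1 : Equiv.Perm (Fin m)) x ∈ (univ : Finset (Fin m)) := fun x => mem_univ _
  have e1 := Finset.orderEmbOfFin_unique (s := (univ : Finset (Fin m)))
    (by simp) h1 h
  have e2 := Finset.orderEmbOfFin_unique (s := (univ : Finset (Fin m)))
    (by simp) h2 (fun a b hab => by simpa using hab)
  ext x
  have a1 := congrFun e1 x
  have a2 := congrFun e2 x
  simp only [Perm.one_apply] at a1 a2 ⊢
  rw [a1, ← a2]

lemma perm_strictAnti_eq_rev {m : ℕ} (W : Equiv.Perm (Fin m)) (h : StrictAnti ⇑W) :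
    W = Fin.revPerm := by
  have hsm : StrictMono (fun x => Fin.rev (W x)) := by
    intro a b hab
    simp only [Fin.rev_lt_rev]
    exact h hab
  have h1 := perm_strictMono_eq_one (W.trans Fin.revPerm) hsm
  refine Equiv.ext fun x => ?_
  rw [Fin.revPerm_apply]
  have := congrFun (congrArg (fun (e : Equiv.Perm (Fin m)) => ⇑e) h1) x
  simp only [Equiv.trans_apply, Fin.revPerm_apply, Equiv.Perm.one_apply] at this
  have := congrArg Fin.rev this
  simpa [Fin.rev_rev] using this

lemma exists_flip (P : ℕ → Prop) : ∀ (d a : ℕ), P a → ¬ P (a + d) →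
    ∃ j, a ≤ j ∧ j < a + d ∧ P j ∧ ¬ P (j + 1) := by
  intro d
  induction d with
  | zero => intro a h1 h2; exact absurd h1 h2
  | succ d ih =>
    intro a h1 h2
    by_cases hd : P (a + d)
    · refine ⟨a + d, by omega, by omega, hd, ?_⟩
      have e : a + (d+1) = (a+d)+1 := by omega
      rwa [e] at h2
    · obtain ⟨j, hj1, hj2, hj3⟩ := ih a h1 hd
      exact ⟨j, hj1, by omega, hj3⟩

lemma valley_rigid {m : ℕ} (W : Equiv.Perm (Fin m)) (h1 : valley W)
    (h2 : valley (W.trans Fin.revPerm)) : W = 1 ∨ W = Fin.revPerm := by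
  rcases Nat.eq_zero_or_pos m with hm | hm
  · subst hm; left; ext x; exact x.elim0
  obtain ⟨k, rfl⟩ : ∃ k, m = k + 1 := ⟨m - 1, by omega⟩
  have hne : ∀ (i j : ℕ) (hi : i < k + 1) (hj : j < k + 1), i ≠ j →
      W ⟨i, hi⟩ ≠ W ⟨j, hj⟩ := by
    intro i j hi hj hij h
    exact hij (by simpa [Fin.ext_iff] using W.injective h)
  by_cases hA : ∀ i : Fin k, W i.castSucc < W i.succ
  · left
    exact perm_strictMono_eq_one W (Fin.strictMono_iff_lt_succ.mpr hA)
  by_cases hB : ∀ i : Fin k, W i.succ < W i.castSucc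
  · right
    exact perm_strictAnti_eq_rev W (Fin.strictAnti_iff_succ_lt.mpr hB)
  exfalso
  push_neg at hA hB
  obtain ⟨a, ha⟩ := hA
  obtain ⟨b, hb⟩ := hB
  have hak : (a : ℕ) < k := a.isLt
  have hbk : (b : ℕ) < k := b.isLt
  obtain ⟨P, hP⟩ : ∃ P : ℕ → Prop, ∀ j (h : j + 1 ≤ k), P j ↔
      W ⟨j, Nat.lt_succ_of_le ((Nat.le_succ j).trans h)⟩ < W ⟨j + 1, Nat.lt_succ_of_le h⟩ :=
    ⟨fun j => ∀ h : j + 1 ≤ k, W ⟨j, Nat.lt_succ_of_le ((Nat.le_succ j).trans h)⟩ <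
        W ⟨j + 1, Nat.lt_succ_of_le h⟩,
      fun j h => ⟨fun H => H h, fun H _ => H⟩⟩
  have ha' : ¬ P a.val := by
    rw [hP a.val hak]
    push_neg
    exact ha
  have hb' : P b.val := by
    rw [hP b.val hbk]
    refine lt_of_le_of_ne ?_ (hne _ _ _ _ (by omega))
    exact hb
  have key : ∃ j, j + 2 ≤ k ∧ ((P j ∧ ¬ P (j+1)) ∨ (¬ P j ∧ P (j+1))) := by
    rcases lt_trichotomy a.val b.val with h | h | h
    · obtain ⟨j, hj1, hj2, hj3, hj4⟩ := exists_flip (fun j => ¬ P j) (b.val - a.val) a.val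
        ha' (by simpa [Nat.add_sub_cancel' (le_of_lt h)] using not_not_intro hb')
      exact ⟨j, by omega, Or.inr ⟨hj3, not_not.mp hj4⟩⟩
    · exact absurd (h ▸ hb') ha'
    · obtain ⟨j, hj1, hj2, hj3, hj4⟩ := exists_flip P (a.val - b.val) b.val
        hb' (by simpa [Nat.add_sub_cancel' (le_of_lt h)] using ha')
      exact ⟨j, by omega, Or.inl ⟨hj3, hj4⟩⟩
  obtain ⟨j, hjk, hcase⟩ := key
  rcases hcase with ⟨hp1, hp2⟩ | ⟨hp1, hp2⟩
  · have hinc : W ⟨j, by omega⟩ < W ⟨j+1, by omega⟩ := (hP j (by omega)).mp hp1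
    have hdec : W ⟨j+2, by omega⟩ < W ⟨j+1, by omega⟩ := by
      rw [hP (j+1) (by omega)] at hp2
      push_neg at hp2
      exact lt_of_le_of_ne hp2 (hne _ _ _ _ (by omega))
    exact h1 ⟨j, by omega⟩ ⟨j+1, by omega⟩ ⟨j+2, by omega⟩
      ⟨by simp [Fin.mk_lt_mk], by simp [Fin.mk_lt_mk], hinc, hdec⟩
  · have hinc : W ⟨j+1, by omega⟩ < W ⟨j+2, by omega⟩ := (hP (j+1) (by omega)).mp hp2
    have hdec : W ⟨j+1, by omega⟩ < W ⟨j, by omega⟩ := by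
      rw [hP j (by omega)] at hp1
      push_neg at hp1
      exact lt_of_le_of_ne hp1 (hne _ _ _ _ (by omega))
    refine h2 ⟨j, by omega⟩ ⟨j+1, by omega⟩ ⟨j+2, by omega⟩
      ⟨by simp [Fin.mk_lt_mk], by simp [Fin.mk_lt_mk], ?_, ?_⟩ <;>
      simp only [Equiv.trans_apply, Fin.revPerm_apply, Fin.rev_lt_rev]
    · exact hdec
    · exact hinc

instance {m : ℕ} (V A : Equiv.Perm (Fin m)) : Decidable (SPwrt V A) :=
  inferInstanceAs (Decidable (∀ c₁ c₂ c₃ : Fin m,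
    ¬(A c₁ < A c₂ ∧ A c₂ < A c₃ ∧ V c₁ < V c₂ ∧ V c₃ < V c₂)))

instance {m : ℕ} (V : Equiv.Perm (Fin m)) : Decidable (valley V) :=
  inferInstanceAs (Decidable (SPwrt V 1))

section count

variable {m : ℕ}

lemma valley_dec [NeZero m] {V : Equiv.Perm (Fin m)} (h : valley V) {p q : Fin m}
    (hpq : p < q) (hq : q < V.symm 0) : V q < V p := by
  by_contra hc
  have hne : V p ≠ V q := fun e => (ne_of_lt hpq) (V.injective e)
  have h1 : V p < V q := lt_of_le_of_ne (not_lt.mp hc) hne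
  have hq0 : V q ≠ 0 := by
    intro e
    rw [← Equiv.eq_symm_apply] at e
    exact absurd (e ▸ hq) (lt_irrefl _)
  have h0 : V (V.symm 0) < V q := by
    rw [Equiv.apply_symm_apply]
    exact lt_of_le_of_ne (Fin.zero_le _) (Ne.symm hq0)
  exact h p q (V.symm 0) ⟨by simpa using hpq, by simpa using hq, h1, h0⟩

lemma valley_inc [NeZero m] {V : Equiv.Perm (Fin m)} (h : valley V) {p q : Fin m}
    (hp : V.symm 0 ≤ p) (hpq : p < q) : V p < V q := by
  have hq0 : V q ≠ 0 := by
    intro e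
    rw [← Equiv.eq_symm_apply] at e
    exact absurd (e ▸ hp.trans_lt hpq) (lt_irrefl _)
  rcases eq_or_lt_of_le hp with he | hlt
  · rw [← he, Equiv.apply_symm_apply]
    exact lt_of_le_of_ne (Fin.zero_le _) (Ne.symm hq0)
  · by_contra hc
    have hne : V q ≠ V p := fun e => (ne_of_lt hpq) (V.injective e.symm)
    have h1 : V q < V p := lt_of_le_of_ne (not_lt.mp hc) hne
    have hp0 : V p ≠ 0 := by
      intro e
      rw [← Equiv.eq_symm_apply] at e
      exact absurd (e ▸ hlt) (lt_irrefl _)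
    have h0 : V (V.symm 0) < V p := by
      rw [Equiv.apply_symm_apply]
      exact lt_of_le_of_ne (Fin.zero_le _) (Ne.symm hp0)
    exact h (V.symm 0) p q ⟨by simpa using hlt, by simpa using hpq, h0, h1⟩

/-- the permutation associated to a subset `L` of `Fin (m+1)`:
list the elements of `L` in decreasing order, then the rest in increasing order. -/
noncomputable def psiFun (L : Finset (Fin (m+1))) : Fin (m+1) → Fin (m+1) :=
  fun i =>
    if h : (i : ℕ) < L.card then
      L.orderEmbOfFin rfl ⟨L.card - 1 - i, by omega⟩
    else
      (Finset.univ \ L).orderEmbOfFin (k := m + 1 - L.card)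
        (by rw [Finset.card_sdiff_of_subset (Finset.subset_univ L)]; simp)
        ⟨(i : ℕ) - L.card, by have := i.isLt; omega⟩

lemma psiFun_inj (L : Finset (Fin (m+1))) : Function.Injective (psiFun L) := by
  intro i j e
  by_cases hi : (i : ℕ) < L.card <;> by_cases hj : (j : ℕ) < L.card
  · rw [psiFun, psiFun, dif_pos hi, dif_pos hj] at e
    have := (L.orderEmbOfFin rfl).injective e
    rw [Fin.mk_eq_mk] at this
    exact Fin.ext (by omega)
  · rw [psiFun, psiFun, dif_pos hi, dif_neg hj] at e
    have h1 := L.orderEmbOfFin_mem rfl ⟨L.card - 1 - i, by omega⟩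
    have h2 := (Finset.univ \ L).orderEmbOfFin_mem (k := m + 1 - L.card)
      (by rw [Finset.card_sdiff_of_subset (Finset.subset_univ L)]; simp)
      ⟨(j : ℕ) - L.card, by have := j.isLt; omega⟩
    rw [e] at h1
    rw [Finset.mem_sdiff] at h2
    exact absurd h1 h2.2
  · rw [psiFun, psiFun, dif_neg hi, dif_pos hj] at e
    have h1 := L.orderEmbOfFin_mem rfl ⟨L.card - 1 - j, by omega⟩
    have h2 := (Finset.univ \ L).orderEmbOfFin_mem (k := m + 1 - L.card)
      (by rw [Finset.card_sdiff_of_subset (Finset.subset_univ L)]; simp)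
      ⟨(i : ℕ) - L.card, by have := i.isLt; omega⟩
    rw [← e] at h1
    rw [Finset.mem_sdiff] at h2
    exact absurd h1 h2.2
  · rw [psiFun, psiFun, dif_neg hi, dif_neg hj] at e
    have := ((Finset.univ \ L).orderEmbOfFin (k := m + 1 - L.card)
      (by rw [Finset.card_sdiff_of_subset (Finset.subset_univ L)]; simp)).injective e
    rw [Fin.mk_eq_mk] at this
    have hi' := i.isLt
    have hj' := j.isLt
    exact Fin.ext (by omega)

noncomputable def psiPerm (L : Finset (Fin (m+1))) : Equiv.Perm (Fin (m+1)) :=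
  Equiv.ofBijective (psiFun L) (Finite.injective_iff_bijective.mp (psiFun_inj L))

lemma psiPerm_apply (L : Finset (Fin (m+1))) (i : Fin (m+1)) :
    psiPerm L i = psiFun L i := rfl

lemma psiPerm_valley (L : Finset (Fin (m+1))) : valley (psiPerm L) := by
  intro c₁ c₂ c₃ hc
  obtain ⟨h12, h23, hV1, hV2⟩ := hc
  simp only [Equiv.Perm.one_apply] at h12 h23
  rw [psiPerm_apply, psiPerm_apply] at hV1 hV2
  by_cases h2 : (c₂ : ℕ) < L.card
  · have h1 : (c₁ : ℕ) < L.card := lt_trans (Fin.lt_def.mp h12) h2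
    rw [psiFun, psiFun, dif_pos h1, dif_pos h2] at hV1
    have hlt : (⟨L.card - 1 - c₂, by omega⟩ : Fin L.card) < ⟨L.card - 1 - c₁, by omega⟩ := by
      rw [Fin.mk_lt_mk]
      have := Fin.lt_def.mp h12
      omega
    exact absurd ((L.orderEmbOfFin rfl).strictMono hlt) (not_lt.mpr (le_of_lt hV1))
  · have h3 : ¬ (c₃ : ℕ) < L.card := fun h => h2 (lt_trans (Fin.lt_def.mp h23) h)
    rw [psiFun, psiFun, dif_neg h3, dif_neg h2] at hV2
    have hlt : (⟨(c₂ : ℕ) - L.card, by have := c₂.isLt; omega⟩ :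
        Fin ((m+1) - L.card)) < ⟨(c₃ : ℕ) - L.card, by have := c₃.isLt; omega⟩ := by
      rw [Fin.mk_lt_mk]
      have := Fin.lt_def.mp h23
      omega
    exact absurd (((Finset.univ \ L).orderEmbOfFin (k := m + 1 - L.card)
      (by rw [Finset.card_sdiff_of_subset (Finset.subset_univ L)]; simp)).strictMono hlt)
      (not_lt.mpr (le_of_lt hV2))

lemma card_lt_of_not_mem {L : Finset (Fin (m+1))} (hL : (0 : Fin (m+1)) ∉ L) :
    L.card < m + 1 := by
  have : L ≠ Finset.univ := fun h => hL (h ▸ Finset.mem_univ 0)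
  simpa using (Finset.card_lt_iff_ne_univ L).mpr this

lemma psiPerm_at_card {L : Finset (Fin (m+1))} (hL : (0 : Fin (m+1)) ∉ L) :
    psiPerm L ⟨L.card, card_lt_of_not_mem hL⟩ = 0 := by
  rw [psiPerm_apply, psiFun, dif_neg (lt_irrefl _)]
  have h0 : 0 < (m+1) - L.card := by have := card_lt_of_not_mem hL; omega
  have he : ∀ (x : ℕ) (hx : x < m + 1 - L.card), x = 0 →
      ∀ pf : (Finset.univ \ L).card = m + 1 - L.card,
      (Finset.univ \ L).orderEmbOfFin pf ⟨x, hx⟩ = 0 := by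
    intro x hx hx0 pf
    subst hx0
    rw [Finset.orderEmbOfFin_zero]
    refine le_antisymm (Finset.min'_le _ _ ?_) (Fin.zero_le _)
    rw [Finset.mem_sdiff]
    exact ⟨Finset.mem_univ _, hL⟩
  exact he _ _ (by simp) _

lemma psiPerm_symm_zero {L : Finset (Fin (m+1))} (hL : (0 : Fin (m+1)) ∉ L) :
    (psiPerm L).symm 0 = ⟨L.card, card_lt_of_not_mem hL⟩ := by
  rw [Equiv.symm_apply_eq, psiPerm_at_card hL]

lemma psiPerm_mem_iff {L : Finset (Fin (m+1))} (hL : (0 : Fin (m+1)) ∉ L)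
    (v : Fin (m+1)) : (psiPerm L).symm v < (psiPerm L).symm 0 ↔ v ∈ L := by
  rw [psiPerm_symm_zero hL]
  constructor
  · intro h
    have hlt : ((psiPerm L).symm v : ℕ) < L.card := Fin.lt_def.mp h
    have : psiPerm L ((psiPerm L).symm v) = v := Equiv.apply_symm_apply _ _
    rw [psiPerm_apply, psiFun, dif_pos hlt] at this
    rw [← this]
    exact L.orderEmbOfFin_mem rfl _
  · intro hv
    have : v ∈ Set.range ⇑(L.orderEmbOfFin rfl) := by
      rw [Finset.range_orderEmbOfFin]
      exact hv
    obtain ⟨j, hj⟩ := this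
    have hidx : L.card - 1 - ((j : ℕ)) < L.card := by have := j.isLt; omega
    have happ : psiPerm L ⟨L.card - 1 - (j : ℕ), lt_trans hidx (card_lt_of_not_mem hL)⟩ = v := by
      rw [psiPerm_apply, psiFun, dif_pos hidx]
      rw [← hj]
      congr 1
      rw [Fin.mk_eq_mk]
      show L.card - 1 - (L.card - 1 - (j : ℕ)) = (j : ℕ)
      have := j.isLt
      omega
    rw [← happ, Equiv.symm_apply_apply, Fin.lt_def]
    exact hidx

lemma card_valley (m : ℕ) :
    (Finset.univ.filter (fun V : Equiv.Perm (Fin (m+1)) => valley V)).card = 2 ^ m := by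
  classical
  have htarget : ((Finset.univ.erase (0 : Fin (m+1))).powerset).card = 2 ^ m := by
    rw [Finset.card_powerset, Finset.card_erase_of_mem (Finset.mem_univ _),
      Finset.card_univ, Fintype.card_fin]
    norm_num
  rw [← htarget]
  refine (Finset.card_bij (fun L _ => psiPerm L) ?_ ?_ ?_).symm
  · intro L hL
    rw [Finset.mem_filter]
    exact ⟨Finset.mem_univ _, psiPerm_valley L⟩
  · intro L1 h1 L2 h2 e
    have hL1 : (0 : Fin (m+1)) ∉ L1 :=
      fun h => by simpa using ((Finset.mem_powerset.mp h1) h)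
    have hL2 : (0 : Fin (m+1)) ∉ L2 :=
      fun h => by simpa using ((Finset.mem_powerset.mp h2) h)
    have e' : psiPerm L1 = psiPerm L2 := e
    ext v
    rw [← psiPerm_mem_iff hL1 v, ← psiPerm_mem_iff hL2 v, e']
  · intro V hV
    rw [Finset.mem_filter] at hV
    have hval : valley V := hV.2
    set t := V.symm 0 with ht
    set L := Finset.univ.filter (fun v => V.symm v < t) with hLdef
    have hmemL : ∀ v : Fin (m+1), v ∈ L ↔ V.symm v < t := by
      intro v
      rw [hLdef, Finset.mem_filter]
      simp
    have hL0 : (0 : Fin (m+1)) ∉ L := by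
      rw [hmemL, ← ht]
      exact lt_irrefl _
    have hLP : L ∈ (Finset.univ.erase (0 : Fin (m+1))).powerset := by
      rw [Finset.mem_powerset, Finset.subset_erase]
      exact ⟨Finset.subset_univ _, hL0⟩
    have hcm : L.card < m + 1 := card_lt_of_not_mem hL0
    have hct : L.card = (t : ℕ) := by
      have h1 : L.card = (Finset.univ.filter (fun i : Fin (m+1) => i < t)).card := by
        refine Finset.card_bij (fun v _ => V.symm v) ?_ ?_ ?_
        · intro v hv
          rw [Finset.mem_filter]
          exact ⟨Finset.mem_univ _, (hmemL v).mp hv⟩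
        · intro v1 _ v2 _ e
          exact V.symm.injective e
        · intro i hi
          rw [Finset.mem_filter] at hi
          refine ⟨V i, ?_, Equiv.symm_apply_apply _ _⟩
          rw [hmemL, Equiv.symm_apply_apply]
          exact hi.2
      rw [h1]
      have h2 : Finset.univ.filter (fun i : Fin (m+1) => i < t) = Finset.Iio t := by
        ext i; simp
      rw [h2]
      simp
    refine ⟨L, hLP, ?_⟩
    ext i
    rw [psiPerm_apply, psiFun]
    by_cases hi : (i : ℕ) < L.card
    · rw [dif_pos hi]
      have hf : ∀ x : Fin L.card,
          (fun j : Fin L.card => V ⟨L.card - 1 - (j : ℕ), by omega⟩) x ∈ L := by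
        intro x
        rw [hmemL, Equiv.symm_apply_apply]
        rw [Fin.lt_def]
        show L.card - 1 - (x : ℕ) < (t : ℕ)
        have := x.isLt
        omega
      have hmono : StrictMono (fun j : Fin L.card => V ⟨L.card - 1 - (j : ℕ), by omega⟩) := by
        intro j1 j2 hj
        refine valley_dec hval ?_ ?_
        · rw [Fin.lt_def]
          show L.card - 1 - (j2 : ℕ) < L.card - 1 - (j1 : ℕ)
          have h1 := Fin.lt_def.mp hj
          have := j2.isLt
          omega
        · rw [← ht, Fin.lt_def]
          show L.card - 1 - (j1 : ℕ) < (t : ℕ)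
          have := j1.isLt
          omega
      have heq := Finset.orderEmbOfFin_unique (rfl : L.card = L.card) hf hmono
      have happ := congrFun heq ⟨L.card - 1 - (i : ℕ), by omega⟩
      dsimp only at happ
      rw [← happ]
      refine congrArg Fin.val (congrArg V (Fin.ext ?_))
      show L.card - 1 - (L.card - 1 - (i : ℕ)) = (i : ℕ)
      omega
    · rw [dif_neg hi]
      have hcard : (Finset.univ \ L).card = (m+1) - L.card := by
        rw [Finset.card_sdiff_of_subset (Finset.subset_univ L)]; simp
      have hf : ∀ x : Fin ((m+1) - L.card),
          (fun j : Fin ((m+1) - L.card) => V ⟨L.card + (j : ℕ),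
            by have := j.isLt; omega⟩) x ∈ Finset.univ \ L := by
        intro x
        rw [Finset.mem_sdiff]
        refine ⟨Finset.mem_univ _, ?_⟩
        rw [hmemL, Equiv.symm_apply_apply]
        rw [not_lt, Fin.le_def]
        show (t : ℕ) ≤ L.card + (x : ℕ)
        omega
      have hmono : StrictMono (fun j : Fin ((m+1) - L.card) => V ⟨L.card + (j : ℕ),
          by have := j.isLt; omega⟩) := by
        intro j1 j2 hj
        refine valley_inc hval ?_ ?_
        · rw [← ht, Fin.le_def]
          show (t : ℕ) ≤ L.card + (j1 : ℕ)
          omega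
        · rw [Fin.lt_def]
          show L.card + (j1 : ℕ) < L.card + (j2 : ℕ)
          have := Fin.lt_def.mp hj
          omega
      have heq := Finset.orderEmbOfFin_unique hcard hf hmono
      have happ := congrFun heq ⟨(i : ℕ) - L.card, by have := i.isLt; omega⟩
      dsimp only at happ
      rw [← happ]
      refine congrArg Fin.val (congrArg V (Fin.ext ?_))
      show L.card + ((i : ℕ) - L.card) = (i : ℕ)
      omega
end count

section axes

variable {k : ℕ}

lemma card_SP (A : Equiv.Perm (Fin (k+1))) :
    (Finset.univ.filter (fun V => SPwrt V A)).card = 2 ^ k := by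
  have himg : Finset.univ.filter (fun V => SPwrt V A)
      = (Finset.univ.filter (fun V => valley V)).image (fun W => W * A) := by
    ext V
    simp only [Finset.mem_filter, Finset.mem_image, Finset.mem_univ, true_and]
    constructor
    · intro h
      exact ⟨V * A⁻¹, (spwrt_iff_valley V A).mp h, by group⟩
    · rintro ⟨W, hW, rfl⟩
      rw [spwrt_iff_valley]
      rwa [mul_inv_cancel_right]
  rw [himg, Finset.card_image_of_injective _ (mul_left_injective A)]
  exact card_valley k

lemma SP_ssubset {A B : Equiv.Perm (Fin (k+1))} (hAB : A ≠ B)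
    (hABr : A ≠ Fin.revPerm * B) :
    ¬ (Finset.univ.filter (fun V => SPwrt V A) ⊆
        Finset.univ.filter (fun V => SPwrt V B)) := by
  intro hsub
  have key : ∀ W : Equiv.Perm (Fin (k+1)), valley W → valley (W * (A * B⁻¹)) := by
    intro W hW
    have h1 : W * A ∈ Finset.univ.filter (fun V => SPwrt V A) := by
      rw [Finset.mem_filter]
      refine ⟨Finset.mem_univ _, ?_⟩
      rw [spwrt_iff_valley, mul_inv_cancel_right]
      exact hW
    have h2 := hsub h1
    rw [Finset.mem_filter] at h2
    have := (spwrt_iff_valley _ B).mp h2.2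
    rwa [mul_assoc] at this
  have hB1 : valley (A * B⁻¹) := by
    have := key 1 valley_one
    rwa [one_mul] at this
  have hB2 : valley ((A * B⁻¹).trans Fin.revPerm) := by
    have := key Fin.revPerm valley_revPerm
    exact this
  rcases valley_rigid _ hB1 hB2 with h | h
  · exact hAB (by rwa [mul_inv_eq_one] at h)
  · apply hABr
    have := congrArg (fun x => x * B) h
    simpa [mul_assoc] using this

def axisRep (k : ℕ) : Finset (Equiv.Perm (Fin (k+2))) :=
  Finset.univ.filter (fun A => A.symm 0 < A.symm (Fin.last (k+1)))

lemma mul_rev_symm_apply (A : Equiv.Perm (Fin (k+2))) (x : Fin (k+2)) :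
    (Fin.revPerm * A).symm x = A.symm x.rev := by
  rw [Equiv.symm_apply_eq, Equiv.Perm.mul_apply, Equiv.apply_symm_apply,
    Fin.revPerm_apply, Fin.rev_rev]

lemma rev_mul_rev_mul (A : Equiv.Perm (Fin (k+2))) :
    Fin.revPerm * (Fin.revPerm * A) = A := by
  rw [← mul_assoc]
  have hrr : (Fin.revPerm * Fin.revPerm : Equiv.Perm (Fin (k+2))) = 1 := by
    ext x
    simp [Fin.rev_rev]
  rw [hrr, one_mul]

lemma mem_axisRep_iff (A : Equiv.Perm (Fin (k+2))) :
    A ∈ axisRep k ↔ A.symm 0 < A.symm (Fin.last (k+1)) := by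
  simp [axisRep]

lemma mem_axisRep_mul_rev (A : Equiv.Perm (Fin (k+2))) :
    Fin.revPerm * A ∈ axisRep k ↔ A ∉ axisRep k := by
  have hne : A.symm 0 ≠ A.symm (Fin.last (k+1)) := by
    intro h
    have h2 : (0:ℕ) = k+1 := by simpa [Fin.ext_iff] using A.symm.injective h
    omega
  rw [mem_axisRep_iff, mem_axisRep_iff]
  rw [mul_rev_symm_apply, mul_rev_symm_apply, Fin.rev_zero, Fin.rev_last]
  constructor
  · intro h hc
    exact absurd (h.trans hc) (lt_irrefl _)
  · intro h
    rcases lt_or_gt_of_ne hne with hlt | hgt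
    · exact absurd hlt h
    · exact hgt

lemma two_mul_card_axisRep : 2 * (axisRep k).card = (k+2).factorial := by
  have hsplit := Finset.card_filter_add_card_filter_not
    (s := (Finset.univ : Finset (Equiv.Perm (Fin (k+2)))))
    (fun A => A.symm 0 < A.symm (Fin.last (k+1)))
  have hcard : (Finset.univ : Finset (Equiv.Perm (Fin (k+2)))).card = (k+2).factorial := by
    rw [Finset.card_univ, Fintype.card_perm, Fintype.card_fin]
  have hmemN : ∀ A : Equiv.Perm (Fin (k+2)),
      A ∈ Finset.univ.filter (fun A => ¬ A.symm 0 < A.symm (Fin.last (k+1))) ↔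
        A ∉ axisRep k := by
    intro A
    rw [Finset.mem_filter, mem_axisRep_iff]
    simp
  have hbij : (axisRep k).card = (Finset.univ.filter
      (fun A : Equiv.Perm (Fin (k+2)) => ¬ A.symm 0 < A.symm (Fin.last (k+1)))).card := by
    refine Finset.card_nbij' (fun A => Fin.revPerm * A) (fun A => Fin.revPerm * A) ?_ ?_ ?_ ?_
    · intro A hA
      simp only [Finset.mem_coe] at hA ⊢
      rw [hmemN]
      intro hc
      rw [mem_axisRep_mul_rev] at hc
      exact hc hA
    · intro A hA
      simp only [Finset.mem_coe] at hA ⊢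
      rw [hmemN] at hA
      rw [mem_axisRep_mul_rev]
      exact hA
    · intro A _
      exact rev_mul_rev_mul A
    · intro A _
      exact rev_mul_rev_mul A
  rw [hcard] at hsplit
  have e : Finset.univ.filter
      (fun A : Equiv.Perm (Fin (k+2)) => A.symm 0 < A.symm (Fin.last (k+1))) = axisRep k := rfl
  rw [e] at hsplit
  omega

lemma inter_card_le {A B : Equiv.Perm (Fin (k+2))} (hA : A ∈ axisRep k)
    (hB : B ∈ axisRep k) (hAB : A ≠ B) :
    (Finset.univ.filter (fun V => SPwrt V A) ∩
      Finset.univ.filter (fun V => SPwrt V B)).card ≤ 2 ^ (k+1) - 1 := by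
  have hABr : A ≠ Fin.revPerm * B := by
    intro h
    rw [h] at hA
    rw [mem_axisRep_mul_rev] at hA
    exact hA hB
  have hss : (Finset.univ.filter (fun V => SPwrt V A) ∩
      Finset.univ.filter (fun V => SPwrt V B)) ⊂ Finset.univ.filter (fun V => SPwrt V A) := by
    refine ⟨Finset.inter_subset_left, ?_⟩
    intro hsub
    refine SP_ssubset (k := k+1) hAB hABr ?_
    intro V hV
    exact (Finset.mem_inter.mp (hsub hV)).2
  have := Finset.card_lt_card hss
  rw [card_SP (k := k+1) A] at this
  omega

end axes

section bonferroni

lemma bonferroni {ι α : Type*} [DecidableEq ι] [DecidableEq α] (f : ι → Finset α)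
    (s : Finset ι) :
    ∑ a ∈ s, (f a).card ≤ (s.biUnion f).card +
      ∑ a ∈ s, ∑ b ∈ s, (if a = b then 0 else (f a ∩ f b).card) := by
  induction s using Finset.induction_on with
  | empty => simp
  | @insert a s ha ih =>
    have hsum : ∀ F : ι → ι → ℕ, ∑ x ∈ insert a s, ∑ y ∈ insert a s, F x y
        = ((F a a + ∑ y ∈ s, F a y) + (∑ x ∈ s, F x a + ∑ x ∈ s, ∑ y ∈ s, F x y)) := by
      intro F
      rw [Finset.sum_insert ha]
      congr 1
      · rw [Finset.sum_insert ha]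
      · calc ∑ x ∈ s, ∑ y ∈ insert a s, F x y
            = ∑ x ∈ s, (F x a + ∑ y ∈ s, F x y) :=
              Finset.sum_congr rfl fun x _ => Finset.sum_insert ha
          _ = _ := Finset.sum_add_distrib
    have h3 := hsum (fun x y => if x = y then 0 else (f x ∩ f y).card)
    have hc1 : ∑ y ∈ s, (if a = y then 0 else (f a ∩ f y).card)
        = ∑ y ∈ s, (f a ∩ f y).card := by
      refine Finset.sum_congr rfl fun y hy => ?_
      rw [if_neg (by rintro rfl; exact ha hy)]
    have hsplit := Finset.card_union_add_card_inter (f a) (s.biUnion f)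
    have hint : (f a ∩ s.biUnion f).card ≤ ∑ b ∈ s, (f a ∩ f b).card := by
      have he : f a ∩ s.biUnion f = s.biUnion (fun b => f a ∩ f b) :=
        Finset.inter_biUnion _ _ _
      rw [he]
      exact Finset.card_biUnion_le
    rw [Finset.sum_insert ha, Finset.biUnion_insert, h3, hc1, if_pos rfl]
    omega

end bonferroni

section elections

variable {k : ℕ}

instance {n m : ℕ} (P : Fin n → Equiv.Perm (Fin m)) : Decidable (SPElection P) :=
  inferInstanceAs (Decidable (∃ A : Equiv.Perm (Fin m), ∀ i, SPwrt (P i) A))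

/-- the set of `n`-voter elections all of whose votes are single peaked w.r.t. `A` -/
def spAxis (k n : ℕ) (A : Equiv.Perm (Fin (k+2))) : Finset (Fin n → Equiv.Perm (Fin (k+2))) :=
  Fintype.piFinset (fun _ => Finset.univ.filter (fun V => SPwrt V A))

lemma mem_spAxis {n : ℕ} {A : Equiv.Perm (Fin (k+2))} {P : Fin n → Equiv.Perm (Fin (k+2))} :
    P ∈ spAxis k n A ↔ ∀ i, SPwrt (P i) A := by
  rw [spAxis]
  simp [Fintype.mem_piFinset]

lemma card_spAxis (n : ℕ) (A : Equiv.Perm (Fin (k+2))) :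
    (spAxis k n A).card = (2 ^ (k+1)) ^ n := by
  rw [spAxis, Fintype.card_piFinset]
  simp [card_SP (k := k+1) A]

lemma card_spAxis_inter (n : ℕ) (A B : Equiv.Perm (Fin (k+2))) :
    (spAxis k n A ∩ spAxis k n B).card =
      ((Finset.univ.filter (fun V => SPwrt V A) ∩
        Finset.univ.filter (fun V => SPwrt V B)).card) ^ n := by
  have he : spAxis k n A ∩ spAxis k n B = Fintype.piFinset
      (fun _ : Fin n => Finset.univ.filter (fun V => SPwrt V A) ∩
        Finset.univ.filter (fun V => SPwrt V B)) := by
    ext P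
    simp only [Finset.mem_inter, Fintype.mem_piFinset, mem_spAxis, Finset.mem_filter,
      Finset.mem_univ, true_and]
    constructor
    · intro ⟨h1, h2⟩ i
      exact ⟨h1 i, h2 i⟩
    · intro h
      exact ⟨fun i => (h i).1, fun i => (h i).2⟩
  rw [he, Fintype.card_piFinset]
  simp

lemma spElection_filter_eq (n : ℕ) :
    Finset.univ.filter (fun P : Fin n → Equiv.Perm (Fin (k+2)) => SPElection P)
      = (axisRep k).biUnion (spAxis k n) := by
  ext P
  rw [Finset.mem_filter, Finset.mem_biUnion]
  constructor
  · rintro ⟨-, A, hA⟩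
    by_cases hmem : A ∈ axisRep k
    · exact ⟨A, hmem, mem_spAxis.mpr hA⟩
    · refine ⟨Fin.revPerm * A, (mem_axisRep_mul_rev A).mpr hmem, mem_spAxis.mpr ?_⟩
      intro i
      exact (spwrt_revPerm_mul _ _).mpr (hA i)
  · rintro ⟨A, -, hA⟩
    exact ⟨Finset.mem_univ _, A, mem_spAxis.mp hA⟩

lemma count_upper (n : ℕ) :
    (Finset.univ.filter (fun P : Fin n → Equiv.Perm (Fin (k+2)) => SPElection P)).card
      ≤ (axisRep k).card * (2 ^ (k+1)) ^ n := by
  rw [spElection_filter_eq]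
  calc ((axisRep k).biUnion (spAxis k n)).card ≤ ∑ A ∈ axisRep k, (spAxis k n A).card :=
        Finset.card_biUnion_le
    _ = (axisRep k).card * (2 ^ (k+1)) ^ n := by
        rw [Finset.sum_congr rfl (fun A _ => card_spAxis n A), Finset.sum_const, smul_eq_mul]

lemma count_lower (n : ℕ) :
    (axisRep k).card * (2 ^ (k+1)) ^ n ≤
      (Finset.univ.filter (fun P : Fin n → Equiv.Perm (Fin (k+2)) => SPElection P)).card
        + (axisRep k).card * (axisRep k).card * (2 ^ (k+1) - 1) ^ n := by
  rw [spElection_filter_eq]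
  have hb := bonferroni (spAxis k n) (axisRep k)
  have h1 : ∑ A ∈ axisRep k, (spAxis k n A).card = (axisRep k).card * (2 ^ (k+1)) ^ n := by
    rw [Finset.sum_congr rfl (fun A _ => card_spAxis n A), Finset.sum_const, smul_eq_mul]
  have h2 : ∑ A ∈ axisRep k, ∑ B ∈ axisRep k,
      (if A = B then 0 else (spAxis k n A ∩ spAxis k n B).card)
        ≤ (axisRep k).card * (axisRep k).card * (2 ^ (k+1) - 1) ^ n := by
    calc ∑ A ∈ axisRep k, ∑ B ∈ axisRep k,
        (if A = B then 0 else (spAxis k n A ∩ spAxis k n B).card)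
        ≤ ∑ A ∈ axisRep k, ∑ B ∈ axisRep k, (2 ^ (k+1) - 1) ^ n := by
          refine Finset.sum_le_sum fun A hA => Finset.sum_le_sum fun B hB => ?_
          split_ifs with h
          · exact Nat.zero_le _
          · rw [card_spAxis_inter]
            exact Nat.pow_le_pow_left (inter_card_le hA hB h) n
      _ = (axisRep k).card * (axisRep k).card * (2 ^ (k+1) - 1) ^ n := by
          rw [Finset.sum_const, Finset.sum_const, smul_eq_mul, smul_eq_mul, mul_assoc]
  omega

end elections

/-- For every fixed `m ≥ 2`, the ratio of the number of single-peaked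
`(n,m)`-elections to `(m!/2)·2^((m-1)n)` tends to `1` as `n → ∞`. -/
theorem single_peaked_count_asymptotics (m : ℕ) (hm : 2 ≤ m) :
    Filter.Tendsto
      (fun n : ℕ =>
        ({P : Fin n → Equiv.Perm (Fin m) | SPElection P}.ncard : ℝ) /
          (((Nat.factorial m : ℝ) / 2) * 2 ^ ((m - 1) * n)))
      Filter.atTop (nhds 1) := by
  obtain ⟨k, rfl⟩ : ∃ k, m = k + 2 := ⟨m - 2, by omega⟩
  set c : ℕ := (axisRep k).card with hc
  have hc2 : 2 * c = (k+2).factorial := two_mul_card_axisRep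
  have hcpos : 0 < c := by
    have := Nat.factorial_pos (k+2)
    omega
  have hcRpos : (0:ℝ) < (c:ℝ) := by exact_mod_cast hcpos
  set N : ℕ → ℕ := fun n =>
    (Finset.univ.filter (fun P : Fin n → Equiv.Perm (Fin (k+2)) => SPElection P)).card with hNdef
  have hfun : (fun n : ℕ =>
        ({P : Fin n → Equiv.Perm (Fin (k+2)) | SPElection P}.ncard : ℝ) /
          (((Nat.factorial (k+2) : ℝ) / 2) * 2 ^ ((k + 2 - 1) * n)))
      = fun n : ℕ => (N n : ℝ) / ((c:ℝ) * 2 ^ ((k+1) * n)) := by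
    funext n
    congr 1
    · rw [hNdef]
      rw [Set.ncard_eq_toFinset_card', Set.toFinset_setOf]
    · have h1 : ((k+2).factorial : ℝ) / 2 = (c:ℝ) := by
        have : ((k+2).factorial : ℝ) = 2 * (c:ℝ) := by exact_mod_cast hc2.symm
        rw [this]
        ring
      rw [h1]
      norm_num
  rw [hfun]
  set q : ℝ := ((2:ℝ)^(k+1) - 1) / 2^(k+1) with hq
  have h2pos : (0:ℝ) < 2^(k+1) := by positivity
  have h21 : (1:ℝ) ≤ 2^(k+1) := by
    exact_mod_cast Nat.one_le_two_pow (n := k+1)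
  have hq0 : 0 ≤ q := div_nonneg (by linarith) (le_of_lt h2pos)
  have hq1 : q < 1 := by
    rw [hq, div_lt_one h2pos]
    linarith
  have hDpos : ∀ n : ℕ, (0:ℝ) < (c:ℝ) * 2 ^ ((k+1) * n) := by
    intro n
    positivity
  have hupper : ∀ n : ℕ, (N n : ℝ) / ((c:ℝ) * 2 ^ ((k+1) * n)) ≤ 1 := by
    intro n
    rw [div_le_one (hDpos n)]
    have := count_upper (k := k) n
    have hcast : (N n : ℝ) ≤ (c:ℝ) * ((2:ℝ)^(k+1)) ^ n := by exact_mod_cast this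
    rw [← pow_mul] at hcast
    exact hcast
  have hlower : ∀ n : ℕ, 1 - (c:ℝ) * q ^ n ≤ (N n : ℝ) / ((c:ℝ) * 2 ^ ((k+1) * n)) := by
    intro n
    rw [le_div_iff₀ (hDpos n)]
    have hnat := count_lower (k := k) n
    have hcast : (c:ℝ) * ((2:ℝ)^(k+1)) ^ n ≤ (N n : ℝ)
        + (c:ℝ) * (c:ℝ) * (((2:ℝ)^(k+1) - 1)) ^ n := by
      have hsub : (((2:ℝ)^(k+1) - 1)) = (((2^(k+1) - 1 : ℕ)) : ℝ) := by
        have h1 : (1:ℕ) ≤ 2^(k+1) := Nat.one_le_two_pow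
        push_cast [Nat.cast_sub h1]
        ring
      rw [hsub]
      exact_mod_cast hnat
    have hqpow : q ^ n * 2 ^ ((k+1) * n) = (((2:ℝ)^(k+1) - 1)) ^ n := by
      rw [hq, div_pow, pow_mul]
      exact div_mul_cancel₀ _ (pow_ne_zero n (ne_of_gt h2pos))
    have hexp : (1 - (c:ℝ) * q ^ n) * ((c:ℝ) * 2 ^ ((k+1) * n))
        = (c:ℝ) * 2 ^ ((k+1) * n) - (c:ℝ) * (c:ℝ) * (q ^ n * 2 ^ ((k+1) * n)) := by
      ring
    rw [hexp, hqpow]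
    rw [← pow_mul] at hcast
    linarith
  refine tendsto_of_tendsto_of_tendsto_of_le_of_le
    (g := fun n : ℕ => 1 - (c:ℝ) * q ^ n) (h := fun _ : ℕ => (1:ℝ)) ?_ ?_ ?_ ?_
  · have := ((tendsto_pow_atTop_nhds_zero_of_lt_one hq0 hq1).const_mul (c:ℝ)).const_sub 1
    simpa using this
  · exact tendsto_const_nhds
  · intro n
    exact hlower n
  · intro n
    exact hupper n
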